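/- Let x ∈ L²([0,1], R^T) be measurable with x_θ ∈ X_θ for all θ, where the correspondence θ ↦ X_θ has nonempty convex compact values. For a finite partition (Θ_i)_i of [0,1] with Lebesgue measures μ_i > 0 and convex compact sets X_i ⊂ R^T such that sup_{θ∈Θ_i} d_H(X_θ, X_i) ≤ d_i for each i, let ψ(x) be the profile equal on each Θ_i to (1/μ_i)∫_{Θ_i} x_ξ dξ. Then the L²-distance from ψ(x) to the set of symmetric profiles y (constant y_i ∈ X_i on each Θ_i) is at most max_i d_i. -/

import Mathlib

open Metric MeasureTheory

/-- Lebesgue measure restricted to the player set `Θ = [0,1]`. -/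
noncomputable def μ01 : Measure ℝ := volume.restrict (Set.Icc 0 1)

/-- Lemma `lm:FY` ii: given a feasible profile `x` (measurable selection of
`θ ↦ 𝒳 θ`), the piecewise-averaged profile `ψ(x)` (equal on each `Θ_i` to the mean
`(1/μ_i) ∫_{Θ_i} x`) is at `L²`-distance at most `max_i d_i` from the set of symmetric
profiles, where `d_i ≥ sup_{θ∈Θ_i} d_H(𝒳 θ, X_i)`. -/
theorem averaged_profile_close_to_symmetric {T I : ℕ} {R : ℝ}
    (𝒳 : ℝ → Set (EuclideanSpace ℝ (Fin T)))
    (Θp : Fin I → Set ℝ) (ι : ℝ → Fin I)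
    (Xi : Fin I → Set (EuclideanSpace ℝ (Fin T)))
    (d : Fin I → ℝ) (D : ℝ)
    (hΘmeas : ∀ i, MeasurableSet (Θp i))
    (hΘdisj : ∀ i j, i ≠ j → Disjoint (Θp i) (Θp j))
    (hΘcover : (⋃ i, Θp i) = Set.Icc (0:ℝ) 1)
    (hμpos : ∀ i, 0 < (volume (Θp i)).toReal)
    (hι : ∀ i, ∀ θ ∈ Θp i, ι θ = i) (hιmeas : Measurable ι)
    (hXne : ∀ θ ∈ Set.Icc (0:ℝ) 1, (𝒳 θ).Nonempty)
    (hXconv : ∀ θ ∈ Set.Icc (0:ℝ) 1, Convex ℝ (𝒳 θ))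
    (hXcomp : ∀ θ ∈ Set.Icc (0:ℝ) 1, IsCompact (𝒳 θ))
    (hXbd : ∀ θ ∈ Set.Icc (0:ℝ) 1, 𝒳 θ ⊆ Metric.closedBall 0 R)
    (hXine : ∀ i, (Xi i).Nonempty) (hXiconv : ∀ i, Convex ℝ (Xi i))
    (hXicomp : ∀ i, IsCompact (Xi i))
    (hH : ∀ i, ∀ θ ∈ Θp i, Metric.hausdorffDist (𝒳 θ) (Xi i) ≤ d i)
    (hD : ∀ i, d i ≤ D)
    (x : ℝ → EuclideanSpace ℝ (Fin T)) (hxm : Measurable x)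
    (hxf : ∀ θ ∈ Set.Icc (0:ℝ) 1, x θ ∈ 𝒳 θ) :
    ∃ v : Fin I → EuclideanSpace ℝ (Fin T), (∀ i, v i ∈ Xi i) ∧
      (∫ θ, ‖((volume (Θp (ι θ))).toReal)⁻¹ • (∫ ξ in Θp (ι θ), x ξ) - v (ι θ)‖ ^ 2 ∂μ01)
        ≤ D ^ 2 := by
  have hsub : ∀ i, Θp i ⊆ Set.Icc (0:ℝ) 1 := fun i => hΘcover ▸ Set.subset_iUnion Θp i
  -- each Θp i is nonempty
  have hΘne : ∀ i, (Θp i).Nonempty := by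
    intro i
    by_contra h
    rw [Set.not_nonempty_iff_eq_empty] at h
    have := hμpos i
    rw [h] at this
    simp at this
  -- d i ≥ 0 and D ≥ 0
  have hd0 : ∀ i, 0 ≤ d i := fun i =>
    le_trans Metric.hausdorffDist_nonneg (hH i _ (hΘne i).choose_spec)
  have hD0 : 0 ≤ D := le_trans (hd0 ⟨0, Nat.pos_of_ne_zero (by
    intro h; subst h; exact absurd ((hΘcover ▸ Set.iUnion_of_empty Θp).symm ▸
      Set.mem_Icc.mpr ⟨le_refl (0:ℝ), zero_le_one⟩) (Set.notMem_empty _))⟩)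
    (hD _)
  -- the averaged point on each piece
  set c : Fin I → EuclideanSpace ℝ (Fin T) :=
    fun i => ((volume (Θp i)).toReal)⁻¹ • (∫ ξ in Θp i, x ξ) with hc
  -- measure facts
  have hμne : ∀ i, volume (Θp i) ≠ 0 := by
    intro i h
    have := hμpos i
    rw [h] at this
    simp at this
  have hμlt : ∀ i, volume (Θp i) ≠ ⊤ := by
    intro i
    refine ne_of_lt (lt_of_le_of_lt (measure_mono (hsub i)) ?_)
    rw [Real.volume_Icc]
    exact ENNReal.ofReal_lt_top
  -- x is integrable on each Θp i
  have hxint : ∀ i, IntegrableOn x (Θp i) := by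
    intro i
    haveI : IsFiniteMeasure (volume.restrict (Θp i)) :=
      ⟨by rw [Measure.restrict_apply_univ]; exact lt_of_le_of_ne le_top (hμlt i)⟩
    refine ⟨hxm.aestronglyMeasurable, HasFiniteIntegral.of_bounded
      (C := |R|) ?_⟩
    filter_upwards [ae_restrict_mem (hΘmeas i)] with θ hθ
    have := hXbd θ (hsub i hθ) (hxf θ (hsub i hθ))
    rw [Metric.mem_closedBall, dist_zero_right] at this
    exact this.trans (le_abs_self R)
  -- c i lies within d i of Xi i
  have hcd : ∀ i, infDist (c i) (Xi i) ≤ d i := by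
    intro i
    have hmem : c i ∈ cthickening (d i) (Xi i) := by
      have : (⨍ ξ in Θp i, x ξ ∂volume) ∈ cthickening (d i) (Xi i) := by
        refine Convex.set_average_mem ((hXiconv i).cthickening (d i))
          isClosed_cthickening (hμne i) (hμlt i) ?_ (hxint i)
        filter_upwards [ae_restrict_mem (hΘmeas i)] with θ hθ
        have hne' : (𝒳 θ).Nonempty := hXne θ (hsub i hθ)
        have hfin : EMetric.hausdorffEdist (𝒳 θ) (Xi i) ≠ ⊤ :=
          Metric.hausdorffEdist_ne_top_of_nonempty_of_bounded hne' (hXine i)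
            (Bornology.IsBounded.subset (isBounded_closedBall) (hXbd θ (hsub i hθ)))
            (hXicomp i).isBounded
        have h1 : infDist (x θ) (Xi i) ≤ d i :=
          le_trans (Metric.infDist_le_hausdorffDist_of_mem (hxf θ (hsub i hθ)) hfin)
            (hH i θ hθ)
        rw [mem_cthickening_iff]
        rw [← ENNReal.ofReal_toReal (Metric.infEdist_ne_top (hXine i))]
        exact ENNReal.ofReal_le_ofReal h1
      rwa [setAverage_eq] at this
    rw [mem_cthickening_iff] at hmem
    calc infDist (c i) (Xi i) = (EMetric.infEdist (c i) (Xi i)).toReal := rfl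
      _ ≤ (ENNReal.ofReal (d i)).toReal := ENNReal.toReal_mono ENNReal.ofReal_ne_top hmem
      _ = d i := ENNReal.toReal_ofReal (hd0 i)
  -- choose v i as a nearest point in Xi i
  choose v hv hvd using fun i => (hXicomp i).exists_infDist_eq_dist (hXine i) (c i)
  refine ⟨v, hv, ?_⟩
  haveI : IsFiniteMeasure μ01 := by
    constructor
    rw [μ01, Measure.restrict_apply_univ, Real.volume_Icc]
    exact ENNReal.ofReal_lt_top
  have hbound : ∀ᵐ θ ∂μ01,
      ‖((volume (Θp (ι θ))).toReal)⁻¹ • (∫ ξ in Θp (ι θ), x ξ) - v (ι θ)‖ ^ 2 ≤ D ^ 2 := by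
    rw [μ01]
    filter_upwards [ae_restrict_mem measurableSet_Icc] with θ hθ
    obtain ⟨i, hi⟩ := Set.mem_iUnion.mp (hΘcover ▸ hθ)
    have hιθ : ι θ = i := hι i θ hi
    have : ‖c (ι θ) - v (ι θ)‖ ≤ D := by
      rw [hιθ, ← dist_eq_norm, ← hvd i]
      exact (hcd i).trans (hD i)
    calc ‖((volume (Θp (ι θ))).toReal)⁻¹ • (∫ ξ in Θp (ι θ), x ξ) - v (ι θ)‖ ^ 2
        = ‖c (ι θ) - v (ι θ)‖ ^ 2 := rfl
      _ ≤ D ^ 2 := pow_le_pow_left₀ (norm_nonneg _) this 2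
  have hmono := integral_mono_of_nonneg
    (Filter.Eventually.of_forall fun θ => sq_nonneg _)
    (integrable_const (D ^ 2) : Integrable (fun _ : ℝ => D ^ 2) μ01) hbound
  refine hmono.trans ?_
  rw [integral_const]
  have : (μ01 Set.univ).toReal = 1 := by
    rw [μ01, Measure.restrict_apply_univ, Real.volume_Icc]
    norm_num
  rw [measureReal_def, this, one_smul]
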